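/- Let $A$ be a finitely generated commutative $\mathbb{Z}$-algebra and let $\mathfrak{m}$ be a maximal ideal of $A$. Then the quotient ring $A/\mathfrak{m}$ is a finite field; in particular, it is a field of positive characteristic. -/

import Mathlib

theorem Int.isJacobsonRing : IsJacobsonRing ℤ := by
  rw [isJacobsonRing_iff_prime_eq]
  intro P hP
  by_cases h : P = ⊥
  · subst h
    refine le_antisymm (fun x hx => ?_) Ideal.le_jacobson
    have h1 := Ideal.mem_jacobson_bot.mp hx x
    rw [Int.isUnit_iff] at h1
    have : x = 0 := by rcases h1 with h1 | h1 <;> nlinarith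
    simp [this]
  · haveI := IsPrime.to_maximal_ideal h
    exact Ideal.jacobson_eq_self_of_isMaximal

/-- **Residue fields of closed points are finite (affine form; Hilbert's
Nullstellensatz over `ℤ`).**  If `A` is a finitely generated commutative
`ℤ`-algebra and `𝔪` is a maximal ideal of `A`, then the quotient `A ⧸ 𝔪` is a
finite field; in particular it has positive (prime) characteristic. -/
theorem quotient_maximalIdeal_finite_of_finiteType_int
    (A : Type) [CommRing A] [Algebra.FiniteType ℤ A]
    (𝔪 : Ideal A) (h𝔪 : 𝔪.IsMaximal) :
    Finite (A ⧸ 𝔪) ∧ ∃ p : ℕ, p.Prime ∧ CharP (A ⧸ 𝔪) p := by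
  letI : Field (A ⧸ 𝔪) := Ideal.Quotient.field 𝔪
  haveI := Int.isJacobsonRing
  haveI : Algebra.FiniteType ℤ (A ⧸ 𝔪) :=
    Algebra.FiniteType.of_surjective (Ideal.Quotient.mkₐ ℤ 𝔪)
      (Ideal.Quotient.mkₐ_surjective ℤ 𝔪)
  haveI : Module.Finite ℤ (A ⧸ 𝔪) := finite_of_finite_type_of_isJacobsonRing ℤ _
  haveI : Algebra.IsIntegral ℤ (A ⧸ 𝔪) := Algebra.IsIntegral.of_finite ℤ _
  haveI : CharP (A ⧸ 𝔪) (ringChar (A ⧸ 𝔪)) := ringChar.charP _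
  have hchar : ringChar (A ⧸ 𝔪) ≠ 0 := by
    intro h
    haveI : CharP (A ⧸ 𝔪) 0 := h ▸ ringChar.charP (A ⧸ 𝔪)
    haveI : CharZero (A ⧸ 𝔪) := CharP.charP_to_charZero _
    have hinj : Function.Injective (algebraMap ℤ (A ⧸ 𝔪)) := by
      rw [show algebraMap ℤ (A ⧸ 𝔪) = Int.castRingHom _ from Subsingleton.elim _ _]
      exact fun a b hab => Int.cast_injective hab
    exact Int.not_isField (isField_of_isIntegral_of_isField hinj (Field.toIsField _))
  have hp : (ringChar (A ⧸ 𝔪)).Prime := CharP.char_prime_of_ne_zero (A ⧸ 𝔪) hchar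
  haveI : NeZero (ringChar (A ⧸ 𝔪)) := ⟨hchar⟩
  haveI : Fact (ringChar (A ⧸ 𝔪)).Prime := ⟨hp⟩
  letI : Algebra (ZMod (ringChar (A ⧸ 𝔪))) (A ⧸ 𝔪) := ZMod.algebra _ _
  haveI : Module.Finite (ZMod (ringChar (A ⧸ 𝔪))) (A ⧸ 𝔪) :=
    Module.Finite.of_restrictScalars_finite ℤ _ _
  exact ⟨Module.finite_of_finite (ZMod (ringChar (A ⧸ 𝔪))), ringChar (A ⧸ 𝔪), hp, inferInstance⟩
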